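/- If R is a ring and σ is an endomorphism of R such that R[t;σ]/(t²) is left morphic, then R is unit regular. -/

import Mathlib

/-- `R[t;σ]/(t²)`, the trivial extension `R ⋉ R(σ)`: pairs `(a, m)` with
multiplication `(a,m)(b,n) = (ab, an + mσ(b))`. -/
def SkewTriv (R : Type*) [Ring R] (σ : R →+* R) : Type _ := R × R

namespace SkewTriv

variable {R : Type*} [Ring R] {σ : R →+* R}

/-- The element `(a, m)` of `SkewTriv R σ`. -/
def mk (σ : R →+* R) (a m : R) : SkewTriv R σ := (a, m)

instance : AddCommGroup (SkewTriv R σ) := inferInstanceAs (AddCommGroup (R × R))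

instance : Mul (SkewTriv R σ) :=
  ⟨fun x y => mk σ (x.1 * y.1) (x.1 * y.2 + x.2 * σ y.1)⟩

instance : One (SkewTriv R σ) := ⟨mk σ 1 0⟩

theorem one_def : (1 : SkewTriv R σ) = mk σ 1 0 := rfl

theorem zero_def : (0 : SkewTriv R σ) = mk σ 0 0 := rfl

theorem mul_def (x y : SkewTriv R σ) :
    x * y = mk σ (x.1 * y.1) (x.1 * y.2 + x.2 * σ y.1) := rfl

theorem add_def (x y : SkewTriv R σ) :
    x + y = mk σ (x.1 + y.1) (x.2 + y.2) := rfl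

instance : Ring (SkewTriv R σ) :=
  { (inferInstanceAs (AddCommGroup (SkewTriv R σ)) : AddCommGroup (SkewTriv R σ)),
      (inferInstanceAs (Mul (SkewTriv R σ)) : Mul (SkewTriv R σ)),
      (inferInstanceAs (One (SkewTriv R σ)) : One (SkewTriv R σ)) with
    mul_assoc := by
      intro x y z
      simp only [mul_def, add_def, one_def, zero_def]
      apply Prod.ext <;>
        simp [mul_def, mk, mul_assoc, mul_add, add_mul, map_mul, add_assoc]
    one_mul := by
      intro x
      simp only [mul_def, add_def, one_def, zero_def]
      apply Prod.ext <;> simp [mul_def, one_def, mk]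
    mul_one := by
      intro x
      simp only [mul_def, add_def, one_def, zero_def]
      apply Prod.ext <;> simp [mul_def, one_def, mk]
    left_distrib := by
      intro x y z
      simp only [mul_def, add_def, one_def, zero_def]
      apply Prod.ext <;>
        simp [mul_def, add_def, mk, mul_add, add_mul, map_add] <;> abel
    right_distrib := by
      intro x y z
      simp only [mul_def, add_def, one_def, zero_def]
      apply Prod.ext <;>
        simp [mul_def, add_def, mk, mul_add, add_mul, map_add] <;> abel
    zero_mul := by
      intro x
      simp only [mul_def, add_def, one_def, zero_def]
      apply Prod.ext <;> simp [mul_def, zero_def, mk]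
    mul_zero := by
      intro x
      simp only [mul_def, add_def, one_def, zero_def]
      apply Prod.ext <;> simp [mul_def, zero_def, mk] }

end SkewTriv

/-- A ring `S` is left morphic if every element `x` admits `y` with
`ann_l(x) = Sy` and `ann_l(y) = Sx`. -/
def IsLeftMorphicRing (S : Type*) [Ring S] : Prop :=
  ∀ x : S, ∃ y : S, ({z : S | z * x = 0} = {z : S | ∃ w, z = w * y}) ∧
    ({z : S | z * y = 0} = {z : S | ∃ w, z = w * x})

/-- If `R[t;σ]/(t²)` is left morphic, then `R` is unit regular. -/
theorem stmt8 {R : Type*} [Ring R] (σ : R →+* R)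
    (h : IsLeftMorphicRing (SkewTriv R σ)) :
    ∀ a : R, ∃ u : Rˣ, a = a * u * a := by
  intro a
  -- ### Stage 1: apply morphicity at x₁ = (0, a) to obtain t with a*t*a = a.
  obtain ⟨y₁, H1, H2⟩ := h (SkewTriv.mk σ 0 a)
  obtain ⟨b₁, c₁⟩ := y₁
  have h1 := Set.ext_iff.mp H1
  have h2 := Set.ext_iff.mp H2
  simp only [Set.mem_setOf_eq] at h1 h2
  -- (0,1) annihilates x₁, hence is a multiple of y₁
  obtain ⟨⟨w₁, w₂⟩, hw⟩ := (h1 (SkewTriv.mk σ 0 1)).mp (by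
    refine Prod.ext ?_ ?_
    · show (0 : R) * 0 = 0; simp
    · show (0 : R) * a + 1 * σ 0 = 0; simp)
  have En1 : (0 : R) = w₁ * b₁ := congrArg Prod.fst hw
  have En2 : (1 : R) = w₁ * c₁ + w₂ * σ b₁ := congrArg Prod.snd hw
  -- x₁ itself annihilates y₁, giving a * σ b₁ = 0
  have En3 : a * σ b₁ = 0 := by
    have hm := (h2 (SkewTriv.mk σ 0 a)).mpr ⟨1, (one_mul _).symm⟩
    have hm2 : (0 : R) * c₁ + a * σ b₁ = 0 := congrArg Prod.snd hm
    simpa using hm2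
  -- the element (σ(b₁)w₁, σ(b₁)w₂ - 1) annihilates y₁, hence lies in S·x₁
  obtain ⟨⟨p, p'⟩, hp⟩ :=
    (h2 (SkewTriv.mk σ (σ b₁ * w₁) (σ b₁ * w₂ - 1))).mp (by
      refine Prod.ext ?_ ?_
      · show σ b₁ * w₁ * b₁ = 0
        rw [mul_assoc, ← En1, mul_zero]
      · show σ b₁ * w₁ * c₁ + (σ b₁ * w₂ - 1) * σ b₁ = 0
        have e : σ b₁ * w₁ * c₁ + (σ b₁ * w₂ - 1) * σ b₁
            = σ b₁ * (w₁ * c₁ + w₂ * σ b₁) - σ b₁ := by noncomm_ring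
        rw [e, ← En2, mul_one, sub_self])
  have hpa : σ b₁ * w₂ - 1 = p * a := by
    have hp2 : σ b₁ * w₂ - 1 = p * a + p' * σ 0 := congrArg Prod.snd hp
    simpa using hp2
  set t : R := -p with ht
  have hta : t * a = 1 - σ b₁ * w₂ := by
    rw [ht, neg_mul, ← hpa, neg_sub]
  have hreg : a * t * a = a := by
    rw [mul_assoc, hta, mul_sub, mul_one, ← mul_assoc, En3, zero_mul, sub_zero]
  -- ### Stage 2: apply morphicity at x₂ = (a, 0).
  obtain ⟨y₂, G1, G2⟩ := h (SkewTriv.mk σ a 0)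
  obtain ⟨b, c⟩ := y₂
  have g1 := Set.ext_iff.mp G1
  have g2 := Set.ext_iff.mp G2
  simp only [Set.mem_setOf_eq] at g1 g2
  -- x₂ annihilates y₂ : ab = 0 (and ac = 0)
  have hE12 := (g2 (SkewTriv.mk σ a 0)).mpr ⟨1, (one_mul _).symm⟩
  have E1 : a * b = 0 := congrArg Prod.fst hE12
  -- y₂ annihilates x₂ : ba = 0, c σa = 0
  have hE34 := (g1 (SkewTriv.mk σ b c)).mpr ⟨1, (one_mul _).symm⟩
  have E3 : b * a = 0 := congrArg Prod.fst hE34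
  have E4 : c * σ a = 0 := by
    have e : b * 0 + c * σ a = 0 := congrArg Prod.snd hE34
    simpa using e
  -- (1 - a*t, 0) annihilates x₂, hence is a multiple of y₂
  obtain ⟨⟨w, w''⟩, hw'⟩ := (g1 (SkewTriv.mk σ (1 - a * t) 0)).mp (by
    refine Prod.ext ?_ ?_
    · show (1 - a * t) * a = 0
      rw [sub_mul, one_mul, hreg, sub_self]
    · show (1 - a * t) * 0 + 0 * σ a = 0; simp)
  have E5 : 1 - a * t = w * b := congrArg Prod.fst hw'
  have E6 : (0 : R) = w * c + w'' * σ b := congrArg Prod.snd hw'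
  -- (a*t*w, a*t*w'') annihilates y₂, hence is a multiple of x₂ : a*t*w = u₁*a
  obtain ⟨⟨u₁, u₁'⟩, hu⟩ :=
    (g2 (SkewTriv.mk σ (a * t * w) (a * t * w''))).mp (by
      refine Prod.ext ?_ ?_
      · show a * t * w * b = 0
        rw [mul_assoc (a * t) w b, ← E5]
        have e : a * t * (1 - a * t) = a * t - (a * t * a) * t := by noncomm_ring
        rw [e, hreg, sub_self]
      · show a * t * w * c + a * t * w'' * σ b = 0
        have e : a * t * w * c + a * t * w'' * σ b
            = a * t * (w * c + w'' * σ b) := by noncomm_ring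
        rw [e, ← E6, mul_zero])
  have E7 : a * t * w = u₁ * a := congrArg Prod.fst hu
  -- (b*w - 1, b*w'' + c*σ(w)) annihilates y₂ : b*w - 1 = u*a
  obtain ⟨⟨u, u'⟩, hv⟩ :=
    (g2 (SkewTriv.mk σ (b * w - 1) (b * w'' + c * σ w))).mp (by
      refine Prod.ext ?_ ?_
      · show (b * w - 1) * b = 0
        have e : (b * w - 1) * b = b * (w * b) - b := by noncomm_ring
        rw [e, ← E5]
        have e2 : b * (1 - a * t) = b - (b * a) * t := by noncomm_ring
        rw [e2, E3, zero_mul, sub_zero, sub_self]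
      · show (b * w - 1) * c + (b * w'' + c * σ w) * σ b = 0
        have e : (b * w - 1) * c + (b * w'' + c * σ w) * σ b
            = b * (w * c + w'' * σ b) + c * (σ w * σ b) - c := by noncomm_ring
        rw [e, ← E6, mul_zero, zero_add, ← map_mul, ← E5, map_sub, map_one,
          map_mul, mul_sub, mul_one, ← mul_assoc, E4, zero_mul, sub_zero,
          sub_self])
  have E9 : b * w - 1 = u * a := congrArg Prod.fst hv
  have E9' : b * w = 1 + u * a := by rw [← E9]; noncomm_ring
  -- ### Construction of the unit
  have key1 : (1 - t * a) * (t * a * t) = 0 := by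
    have e : (1 - t * a) * (t * a * t) = t * a * t - t * (a * t * a) * t := by
      noncomm_ring
    rw [e, hreg, sub_self]
  have key2 : (1 - t * a) * b = b := by
    have e : (1 - t * a) * b = b - t * (a * b) := by noncomm_ring
    rw [e, E1, mul_zero, sub_zero]
  have key3 : a * (1 - t * a) = 0 := by
    have e : a * (1 - t * a) = a - a * t * a := by noncomm_ring
    rw [e, hreg, sub_self]
  have hUV : (a + w * (1 - t * a)) * (t * a * t + b) = 1 := by
    have e : (a + w * (1 - t * a)) * (t * a * t + b)
        = a * t * a * t + a * b + w * ((1 - t * a) * (t * a * t))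
          + w * ((1 - t * a) * b) := by noncomm_ring
    rw [e, hreg, E1, key1, mul_zero, key2, ← E5]
    noncomm_ring
  have hVU : (t * a * t + b) * (a + w * (1 - t * a)) = 1 := by
    have e : (t * a * t + b) * (a + w * (1 - t * a))
        = t * (a * t * a) + t * (a * t * w) * (1 - t * a) + b * a
          + b * w * (1 - t * a) := by noncomm_ring
    rw [e, hreg, E7, E3, E9']
    have e2 : t * (u₁ * a) * (1 - t * a) = t * u₁ * (a * (1 - t * a)) := by
      noncomm_ring
    have e3 : (1 + u * a) * (1 - t * a)
        = 1 - t * a + u * (a * (1 - t * a)) := by noncomm_ring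
    rw [e2, e3, key3]
    noncomm_ring
  refine ⟨⟨t * a * t + b, a + w * (1 - t * a), hVU, hUV⟩, ?_⟩
  show a = a * (t * a * t + b) * a
  have hav : a * (t * a * t + b) = a * t := by
    have e : a * (t * a * t + b) = a * t * a * t + a * b := by noncomm_ring
    rw [e, hreg, E1, add_zero]
  rw [hav, hreg]
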